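/- Let V be a finite-dimensional real vector space, C ⊂ V a proper closed convex full-dimensional cone, s > 1, and f ∈ HConc_s(C). Suppose f is continuously differentiable on C° with normalized gradient D(v) = Df(v)/s, and suppose v₁, v₂ ∈ C° satisfy D(v₁) = D(v₂). Then f(v₁) = f(v₂) and, if moreover f is strictly log concave on C°, v₁ = v₂. -/

import Mathlib

open Set Topology Filter

section Aux
variable {V : Type*} [NormedAddCommGroup V] [NormedSpace ℝ V]

/-- Euler's relation for homogeneous functions. -/
lemma euler_relation_aux (C : Set V)
    (s : ℝ) (f : V → ℝ)
    (hfhom : ∀ t : ℝ, 0 ≤ t → ∀ v ∈ C, f (t • v) = t ^ s * f v)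
    (v : V) (hvC : v ∈ C) (hdf : DifferentiableAt ℝ f v) :
    (fderiv ℝ f v) v = s * f v := by
  have hlin : HasDerivAt (fun t : ℝ => t • v) v 1 := by
    simpa using (hasDerivAt_id (1:ℝ)).smul_const v
  have hfd : HasFDerivAt f (fderiv ℝ f v) ((fun t : ℝ => t • v) 1) := by
    simpa using hdf.hasFDerivAt
  have h1 : HasDerivAt (fun t : ℝ => f (t • v)) ((fderiv ℝ f v) v) 1 :=
    hfd.comp_hasDerivAt 1 hlin
  have h2 : HasDerivAt (fun t : ℝ => t ^ s * f v) (s * f v) 1 := by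
    have := (Real.hasDerivAt_rpow_const (x := (1:ℝ)) (p := s)
      (Or.inl one_ne_zero)).mul_const (f v)
    simpa using this
  have heq : (fun t : ℝ => t ^ s * f v) =ᶠ[𝓝 (1:ℝ)] (fun t => f (t • v)) := by
    filter_upwards [Ioi_mem_nhds (zero_lt_one (α := ℝ))] with t ht
    exact (hfhom t (le_of_lt ht) v hvC).symm
  exact ((h2.congr_of_eventuallyEq heq.symm).unique h1).symm

/-- Gradient inequality from a one-sided comparison. -/
lemma grad_ineq_aux (s : ℝ) (hs : 1 < s) (f : V → ℝ) (v x : V) (c : ℝ)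
    (hfv : 0 < f v) (hdf : DifferentiableAt ℝ f v)
    (hkey : ∀ t ∈ Set.Ioc (0:ℝ) 1, (f v ^ (1/s) + t * c) ^ s ≤ f (v + t • x)) :
    s * (f v ^ (1/s)) ^ (s - 1) * c ≤ (fderiv ℝ f v) x := by
  set a := f v ^ (1/s) with ha
  have hs0 : s ≠ 0 := by positivity
  have ha0 : 0 < a := Real.rpow_pos_of_pos hfv _
  have has : a ^ s = f v := by
    rw [ha, ← Real.rpow_mul hfv.le, one_div_mul_cancel hs0, Real.rpow_one]
  have hlin : HasDerivAt (fun t : ℝ => v + t • x) x 0 := by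
    simpa using ((hasDerivAt_id (0:ℝ)).smul_const x).const_add v
  have hfd : HasFDerivAt f (fderiv ℝ f v) ((fun t : ℝ => v + t • x) 0) := by
    simpa using hdf.hasFDerivAt
  have hg : HasDerivAt (fun t : ℝ => f (v + t • x)) ((fderiv ℝ f v) x) 0 :=
    hfd.comp_hasDerivAt 0 hlin
  have hl2 : HasDerivAt (fun t : ℝ => a + t * c) c 0 := by
    simpa using ((hasDerivAt_id (0:ℝ)).mul_const c).const_add a
  have hr : HasDerivAt (fun y : ℝ => y ^ s) (s * a ^ (s-1)) ((fun t : ℝ => a + t * c) 0) := by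
    simpa using Real.hasDerivAt_rpow_const (x := a) (p := s) (Or.inl ha0.ne')
  have hψ : HasDerivAt (fun t : ℝ => (a + t * c) ^ s) (s * a ^ (s-1) * c) 0 := by
    simpa [mul_assoc, Function.comp_def] using hr.comp 0 hl2
  set D := (fderiv ℝ f v) x with hD
  have hq : HasDerivAt (fun t : ℝ => f (v + t • x) - (a + t * c) ^ s)
      (D - s * a ^ (s-1) * c) 0 := hg.sub hψ
  set q : ℝ → ℝ := fun t => f (v + t • x) - (a + t * c) ^ s with hqdef
  have hq0 : q 0 = 0 := by simp [hqdef, has]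
  have hslope : Tendsto (slope q 0) (𝓝[≠] (0:ℝ)) (𝓝 (D - s * a ^ (s-1) * c)) :=
    hasDerivAt_iff_tendsto_slope.mp hq
  have hmono : 𝓝[>] (0:ℝ) ≤ 𝓝[≠] (0:ℝ) :=
    nhdsWithin_mono _ (fun t ht => ne_of_gt ht)
  have h2 : Tendsto (slope q 0) (𝓝[>] (0:ℝ)) (𝓝 (D - s * a ^ (s-1) * c)) :=
    hslope.mono_left hmono
  have hev : ∀ᶠ t in 𝓝[>] (0:ℝ), 0 ≤ slope q 0 t := by
    filter_upwards [Ioc_mem_nhdsGT_of_mem (Set.mem_Ico.mpr ⟨le_refl 0, zero_lt_one⟩)] with t ht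
    have hqt : 0 ≤ q t := by
      have := hkey t ht
      simp only [hqdef]; linarith
    rw [slope_def_field, hq0, sub_zero, sub_zero]
    exact div_nonneg hqt ht.1.le
  have hfin : (0:ℝ) ≤ D - s * a ^ (s-1) * c := ge_of_tendsto h2 hev
  linarith

end Aux

variable {V : Type*} [NormedAddCommGroup V] [NormedSpace ℝ V] [FiniteDimensional ℝ V]

/-- The dual cone of `C` inside the continuous dual of `V`. -/
def dualCone (C : Set V) : Set (V →L[ℝ] ℝ) := {w | ∀ v ∈ C, 0 ≤ w v}

/-- The polar transform of a weight-`s` homogeneous function `f` on the cone `C`. -/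
noncomputable def polar (C : Set V) (s : ℝ) (f : V → ℝ) (w : V →L[ℝ] ℝ) : ℝ :=
  sInf ((fun v => (w v / f v ^ (1/s)) ^ (s/(s-1))) '' interior C)

set_option maxHeartbeats 1000000 in
theorem gradient_determines_value_and_point
    (C : Set V) (hCcl : IsClosed C) (hCcv : Convex ℝ C)
    (hCcone : ∀ v ∈ C, ∀ t : ℝ, 0 ≤ t → t • v ∈ C)
    (hCproper : ∀ v ∈ C, -v ∈ C → v = 0)
    (hCfull : (interior C).Nonempty)
    (s : ℝ) (hs : 1 < s) (f : V → ℝ)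
    (hfusc : UpperSemicontinuousOn f C)
    (hf0 : ∀ v ∈ C, 0 ≤ f v)
    (hfhom : ∀ t : ℝ, 0 ≤ t → ∀ v ∈ C, f (t • v) = t ^ s * f v)
    (hfpos : ∀ v ∈ interior C, 0 < f v)
    (hfconc : ∀ v ∈ C, ∀ x ∈ C, f v ^ (1/s) + f x ^ (1/s) ≤ f (v + x) ^ (1/s))
    (hfC1 : ContDiffOn ℝ 1 f (interior C))
    (v₁ : V) (hv₁ : v₁ ∈ interior C) (v₂ : V) (hv₂ : v₂ ∈ interior C)
    (hD : (s⁻¹ • fderiv ℝ f v₁ : V →L[ℝ] ℝ) = s⁻¹ • fderiv ℝ f v₂) :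
    f v₁ = f v₂ ∧
      ((∀ v ∈ interior C, ∀ x ∈ interior C, (¬ ∃ t : ℝ, x = t • v) →
          f v ^ (1/s) + f x ^ (1/s) < f (v + x) ^ (1/s)) → v₁ = v₂) := by
  have hspos : (0:ℝ) < s := by linarith
  have hsne : s ≠ 0 := hspos.ne'
  have hdf : ∀ v ∈ interior C, DifferentiableAt ℝ f v := fun v hv =>
    (hfC1.contDiffAt (isOpen_interior.mem_nhds hv)).differentiableAt one_ne_zero
  have hdf1 := hdf v₁ hv₁
  have hdf2 := hdf v₂ hv₂
  have hL : fderiv ℝ f v₁ = fderiv ℝ f v₂ := by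
    have := congrArg (fun L : V →L[ℝ] ℝ => (s : ℝ) • L) hD
    simpa [smul_smul, mul_inv_cancel₀ hsne] using this
  have hCadd : ∀ u ∈ C, ∀ w ∈ C, u + w ∈ C := by
    intro u hu w hw
    have h2 : (1/2:ℝ) • u + (1/2:ℝ) • w ∈ C :=
      hCcv hu hw (by norm_num) (by norm_num) (by norm_num)
    have h3 := hCcone _ h2 2 (by norm_num)
    have : (2:ℝ) • ((1/2:ℝ) • u + (1/2:ℝ) • w) = u + w := by
      rw [smul_add, smul_smul, smul_smul]; norm_num
    rwa [this] at h3
  have ha := hfpos v₁ hv₁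
  have hb := hfpos v₂ hv₂
  have hhom' : ∀ t : ℝ, 0 ≤ t → ∀ x ∈ C, f (t • x) ^ (1/s) = t * f x ^ (1/s) := by
    intro t ht x hx
    rw [hfhom t ht x hx, Real.mul_rpow (by positivity) (hf0 x hx),
        ← Real.rpow_mul ht, mul_one_div_cancel hsne, Real.rpow_one]
  have hE1 : (fderiv ℝ f v₁) v₁ = s * f v₁ :=
    euler_relation_aux C s f hfhom v₁ (interior_subset hv₁) hdf1
  have hE2 : (fderiv ℝ f v₂) v₂ = s * f v₂ :=
    euler_relation_aux C s f hfhom v₂ (interior_subset hv₂) hdf2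
  -- the (non-strict) gradient inequality
  have hkey1 : ∀ v ∈ interior C, ∀ x ∈ interior C,
      s * (f v ^ (1/s)) ^ (s-1) * (f x ^ (1/s)) ≤ (fderiv ℝ f v) x := by
    intro v hv x hx
    apply grad_ineq_aux s hs f v x _ (hfpos v hv) (hdf v hv)
    intro t ht
    have hxC := interior_subset hx
    have hvC := interior_subset hv
    have htx : t • x ∈ C := hCcone x hxC t ht.1.le
    have hsum : v + t • x ∈ C := hCadd v hvC _ htx
    have h := hfconc v hvC (t • x) htx
    rw [hhom' t ht.1.le x hxC] at h
    have hbase : (0:ℝ) ≤ f v ^ (1/s) + t * f x ^ (1/s) := by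
      have h1 : (0:ℝ) ≤ f v ^ (1/s) := Real.rpow_nonneg (hf0 v hvC) _
      have h2 : (0:ℝ) ≤ f x ^ (1/s) := Real.rpow_nonneg (hf0 x hxC) _
      nlinarith [ht.1.le]
    calc (f v ^ (1/s) + t * f x ^ (1/s)) ^ s
        ≤ (f (v + t • x) ^ (1/s)) ^ s := Real.rpow_le_rpow hbase h (by positivity)
      _ = f (v + t • x) := by
          rw [← Real.rpow_mul (hf0 _ hsum), one_div_mul_cancel hsne, Real.rpow_one]
  -- arithmetic lemma
  have hineq : ∀ a b : ℝ, 0 < a → 0 < b →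
      s * (a ^ (1/s)) ^ (s-1) * b ^ (1/s) ≤ s * b → a ≤ b := by
    intro a b ha' hb' h
    have hb1 : b ^ ((1/s)*(s-1)) * b ^ (1/s) = b := by
      rw [← Real.rpow_add hb', show 1/s*(s-1) + 1/s = 1 by field_simp; ring, Real.rpow_one]
    have hap : (a ^ (1/s)) ^ (s-1) = a ^ ((1/s)*(s-1)) := (Real.rpow_mul ha'.le _ _).symm
    rw [hap] at h
    have h2 : a ^ ((1/s)*(s-1)) * b ^ (1/s) ≤ b ^ ((1/s)*(s-1)) * b ^ (1/s) := by
      rw [hb1]; nlinarith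
    have h3 : a ^ ((1/s)*(s-1)) ≤ b ^ ((1/s)*(s-1)) :=
      le_of_mul_le_mul_right h2 (Real.rpow_pos_of_pos hb' _)
    have hppos : (0:ℝ) < (1/s)*(s-1) := mul_pos (by positivity) (by linarith)
    have hpne : (1/s)*(s-1) ≠ 0 := hppos.ne'
    calc a = (a ^ ((1/s)*(s-1))) ^ ((1/s)*(s-1))⁻¹ := (Real.rpow_rpow_inv ha'.le hpne).symm
      _ ≤ (b ^ ((1/s)*(s-1))) ^ ((1/s)*(s-1))⁻¹ :=
          Real.rpow_le_rpow (Real.rpow_nonneg ha'.le _) h3 (inv_nonneg.mpr hppos.le)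
      _ = b := Real.rpow_rpow_inv hb'.le hpne
  have hba : f v₁ ≤ f v₂ := by
    have h := hkey1 v₁ hv₁ v₂ hv₂
    rw [hL, hE2] at h
    exact hineq _ _ ha hb h
  have hab : f v₂ ≤ f v₁ := by
    have h := hkey1 v₂ hv₂ v₁ hv₁
    rw [← hL, hE1] at h
    exact hineq _ _ hb ha h
  have hfeq : f v₁ = f v₂ := le_antisymm hba hab
  refine ⟨hfeq, ?_⟩
  intro H
  by_cases hprop : ∃ t : ℝ, v₂ = t • v₁
  · obtain ⟨t, ht⟩ := hprop
    rcases le_or_gt t 0 with htn | htp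
    · exfalso
      have hneg : -v₂ ∈ C := by
        have h3 := hCcone v₁ (interior_subset hv₁) (-t) (by linarith)
        rw [ht, ← neg_smul]
        exact h3
      have h0 := hCproper v₂ (interior_subset hv₂) hneg
      have hp := hfpos v₂ hv₂
      rw [h0] at hp
      have h00 : f 0 = 0 := by
        have := hfhom 0 le_rfl v₁ (interior_subset hv₁)
        simpa [Real.zero_rpow hsne] using this
      linarith
    · have hfv2 : f v₂ = t ^ s * f v₁ := by
        rw [ht]; exact hfhom t htp.le v₁ (interior_subset hv₁)
      rw [hfeq] at hfv2
      have hts : t ^ s = 1 := by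
        have h1 : t ^ s * f v₂ = 1 * f v₂ := by linarith
        exact mul_right_cancel₀ hb.ne' h1
      have ht1 : t = 1 := by
        calc t = (t ^ s) ^ s⁻¹ := (Real.rpow_rpow_inv htp.le hsne).symm
          _ = (1:ℝ) ^ s⁻¹ := by rw [hts]
          _ = 1 := Real.one_rpow _
      rw [ht, ht1, one_smul]
  · exfalso
    have hstrict := H v₁ hv₁ v₂ hv₂ hprop
    set c := f (v₁ + v₂) ^ (1/s) - f v₁ ^ (1/s) with hc
    have hb2nn : (0:ℝ) ≤ f v₂ ^ (1/s) := Real.rpow_nonneg hb.le _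
    have hcgt : f v₂ ^ (1/s) < c := by rw [hc]; linarith
    have hcpos : 0 < c := lt_of_le_of_lt hb2nn hcgt
    have hv1C := interior_subset hv₁
    have hv2C := interior_subset hv₂
    have hkey : ∀ t ∈ Set.Ioc (0:ℝ) 1, (f v₁ ^ (1/s) + t * c) ^ s ≤ f (v₁ + t • v₂) := by
      intro t ht
      have h1t : (0:ℝ) ≤ 1 - t := by linarith [ht.2]
      have ha1 : (1-t) • v₁ ∈ C := hCcone v₁ hv1C _ h1t
      have hsumC : v₁ + v₂ ∈ C := hCadd _ hv1C _ hv2C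
      have ha2 : t • (v₁ + v₂) ∈ C := hCcone _ hsumC t ht.1.le
      have h := hfconc _ ha1 _ ha2
      rw [hhom' (1-t) h1t v₁ hv1C, hhom' t ht.1.le _ hsumC] at h
      have hveq : (1-t) • v₁ + t • (v₁ + v₂) = v₁ + t • v₂ := by
        rw [sub_smul, smul_add, one_smul]; abel
      rw [hveq] at h
      have hcomb : f v₁ ^ (1/s) + t * c = (1-t) * f v₁ ^ (1/s) + t * f (v₁ + v₂) ^ (1/s) := by
        rw [hc]; ring
      have h' : f v₁ ^ (1/s) + t * c ≤ f (v₁ + t • v₂) ^ (1/s) := by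
        rw [hcomb]; exact h
      have hmem : v₁ + t • v₂ ∈ C := hCadd _ hv1C _ (hCcone _ hv2C t ht.1.le)
      have hbase : 0 ≤ f v₁ ^ (1/s) + t * c := by
        have h1 : (0:ℝ) ≤ f v₁ ^ (1/s) := Real.rpow_nonneg (hf0 _ hv1C) _
        nlinarith [ht.1.le]
      calc (f v₁ ^ (1/s) + t * c) ^ s
          ≤ (f (v₁ + t • v₂) ^ (1/s)) ^ s := Real.rpow_le_rpow hbase h' (by positivity)
        _ = f (v₁ + t • v₂) := by
            rw [← Real.rpow_mul (hf0 _ hmem), one_div_mul_cancel hsne, Real.rpow_one]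
    have hgi := grad_ineq_aux s hs f v₁ v₂ c ha hdf1 hkey
    rw [hL, hE2] at hgi
    rw [hfeq] at hgi
    have hP : 0 < (f v₂ ^ (1/s)) ^ (s-1) :=
      Real.rpow_pos_of_pos (Real.rpow_pos_of_pos hb _) _
    have hq : (f v₂ ^ (1/s)) ^ (s-1) * f v₂ ^ (1/s) = f v₂ := by
      rw [← Real.rpow_mul hb.le, ← Real.rpow_add hb,
        show 1/s*(s-1) + 1/s = 1 by field_simp; ring, Real.rpow_one]
    have h1 : (f v₂ ^ (1/s)) ^ (s-1) * f v₂ ^ (1/s) < (f v₂ ^ (1/s)) ^ (s-1) * c :=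
      mul_lt_mul_of_pos_left hcgt hP
    rw [hq] at h1
    have h2 : s * f v₂ < s * ((f v₂ ^ (1/s)) ^ (s-1) * c) :=
      mul_lt_mul_of_pos_left h1 hspos
    rw [← mul_assoc] at h2
    linarith
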